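/- Let $k \geq 1$, let $R_1, \dots, R_k$ be rational numbers with $R_j \neq 0$ and $R_j \neq 1$ for all $j$, and let $r_k$ be any rational number. Then $$\frac{r_k}{R_1 \cdots R_k} + \sum_{i=1}^{k-1} \frac{1}{R_1 \cdots R_i (R_i - 1) \cdots (R_{k-1} - 1)} - \sum_{i=1}^{k} \frac{R_k - r_k}{R_1 \cdots R_i (R_i - 1) \cdots (R_k - 1)} = \frac{r_k - 1}{(R_1 - 1) \cdots (R_k - 1)},$$ where in each summand the denominator contains $R_1, \dots, R_i$ together with $R_i - 1, R_{i+1} - 1, \dots$ up to the indicated index. -/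
import Mathlib


open Finset

lemma prod_telescope_aux (k : ℕ) (R : ℕ → ℚ)
    (h0 : ∀ j ∈ Icc 1 k, R j ≠ 0) (h1 : ∀ j ∈ Icc 1 k, R j ≠ 1) :
    ∑ i ∈ Icc 1 k, 1 / ((∏ j ∈ Icc 1 i, R j) * ∏ j ∈ Icc i k, (R j - 1))
      = 1 / ∏ j ∈ Icc 1 k, (R j - 1) - 1 / ∏ j ∈ Icc 1 k, R j := by
  induction k with
  | zero => simp
  | succ n ih =>
    have h0' : ∀ j ∈ Icc 1 n, R j ≠ 0 := fun j hj =>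
      h0 j (Icc_subset_Icc_right (by omega) hj)
    have h1' : ∀ j ∈ Icc 1 n, R j ≠ 1 := fun j hj =>
      h1 j (Icc_subset_Icc_right (by omega) hj)
    have ha : (∏ j ∈ Icc 1 n, R j) ≠ 0 := Finset.prod_ne_zero_iff.2 h0'
    have hb : (∏ j ∈ Icc 1 n, (R j - 1)) ≠ 0 :=
      Finset.prod_ne_zero_iff.2 fun j hj => sub_ne_zero.2 (h1' j hj)
    have hx : R (n+1) ≠ 0 := h0 _ (by simp)
    have hx1 : R (n+1) - 1 ≠ 0 := sub_ne_zero.2 (h1 _ (by simp))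
    rw [Finset.sum_Icc_succ_top (by omega : 1 ≤ n + 1)]
    have key : ∑ i ∈ Icc 1 n, 1 / ((∏ j ∈ Icc 1 i, R j) * ∏ j ∈ Icc i (n+1), (R j - 1))
        = (1 / (R (n+1) - 1)) * (1 / ∏ j ∈ Icc 1 n, (R j - 1) - 1 / ∏ j ∈ Icc 1 n, R j) := by
      rw [← ih h0' h1', Finset.mul_sum]
      apply Finset.sum_congr rfl
      intro i hi
      have hin : i ≤ n := (Finset.mem_Icc.1 hi).2
      rw [Finset.prod_Icc_succ_top (by omega : i ≤ n + 1)]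
      simp only [one_div, mul_inv]
      ring
    rw [key, Finset.prod_Icc_succ_top (by omega : 1 ≤ n + 1),
      Finset.prod_Icc_succ_top (by omega : 1 ≤ n + 1), Finset.Icc_self,
      Finset.prod_singleton]
    field_simp
    ring

theorem stmt_2 (k : ℕ) (hk : 1 ≤ k) (R : ℕ → ℚ) (r : ℚ)
    (h0 : ∀ j ∈ Icc 1 k, R j ≠ 0) (h1 : ∀ j ∈ Icc 1 k, R j ≠ 1) :
    (r / ∏ j ∈ Icc 1 k, R j)
      + ∑ i ∈ Icc 1 (k - 1),
          1 / ((∏ j ∈ Icc 1 i, R j) * ∏ j ∈ Icc i (k - 1), (R j - 1))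
      - ∑ i ∈ Icc 1 k,
          (R k - r) / ((∏ j ∈ Icc 1 i, R j) * ∏ j ∈ Icc i k, (R j - 1))
      = (r - 1) / ∏ j ∈ Icc 1 k, (R j - 1) := by
  obtain ⟨m, rfl⟩ : ∃ m, k = m + 1 := ⟨k - 1, by omega⟩
  simp only [Nat.add_sub_cancel]
  have h0' : ∀ j ∈ Icc 1 m, R j ≠ 0 := fun j hj =>
    h0 j (Icc_subset_Icc_right (by omega) hj)
  have h1' : ∀ j ∈ Icc 1 m, R j ≠ 1 := fun j hj =>
    h1 j (Icc_subset_Icc_right (by omega) hj)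
  have ha : (∏ j ∈ Icc 1 m, R j) ≠ 0 := Finset.prod_ne_zero_iff.2 h0'
  have hb : (∏ j ∈ Icc 1 m, (R j - 1)) ≠ 0 :=
    Finset.prod_ne_zero_iff.2 fun j hj => sub_ne_zero.2 (h1' j hj)
  have hx : R (m+1) ≠ 0 := h0 _ (by simp)
  have hx1 : R (m+1) - 1 ≠ 0 := sub_ne_zero.2 (h1 _ (by simp))
  have h3 : ∑ i ∈ Icc 1 (m+1),
      (R (m+1) - r) / ((∏ j ∈ Icc 1 i, R j) * ∏ j ∈ Icc i (m+1), (R j - 1))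
      = (R (m+1) - r) * ∑ i ∈ Icc 1 (m+1),
          1 / ((∏ j ∈ Icc 1 i, R j) * ∏ j ∈ Icc i (m+1), (R j - 1)) := by
    rw [Finset.mul_sum]
    exact Finset.sum_congr rfl fun i _ => by rw [mul_one_div]
  rw [h3, prod_telescope_aux (m+1) R h0 h1, prod_telescope_aux m R h0' h1',
    Finset.prod_Icc_succ_top (by omega : 1 ≤ m + 1),
    Finset.prod_Icc_succ_top (by omega : 1 ≤ m + 1)]
  field_simp
  ring
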